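/- Let C be an n×n nonnegative real matrix, m the sum of all its entries, d ≥ 0 any number at least the largest diagonal entry of C, and f ≥ 0 any number at least the largest off-diagonal entry of C. Then ρ(C) ≤ (d − f + sqrt((d−f)^2 + 4mf))/2. Moreover, if mf > 0, then equality holds if and only if m = k(k−1)f + kd and there is a permutation matrix P and a nonnegative integer k such that PCP^T is the block diagonal matrix (fJ_k + (d−f)I_k) ⊕ O_{n−k}, where J_k is the k×k all-ones matrix, I_k the identity, and O_{n−k} the zero matrix. -/

import Mathlib

/-- Spectral radius of a real square matrix: maximum modulus of its complex eigenvalues. -/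
noncomputable def specRad {n : ℕ} (A : Matrix (Fin n) (Fin n) ℝ) : ℝ :=
  ((A.map (fun x => (x : ℂ))).charpoly.roots.map (fun z => ‖z‖)).foldr max 0



open Matrix Polynomial in
lemma my_charpoly_eval {n : ℕ} (M : Matrix (Fin n) (Fin n) ℂ) (z : ℂ) :
    M.charpoly.eval z = (z • (1 : Matrix (Fin n) (Fin n) ℂ) - M).det := by
  rw [Matrix.charpoly, show (Polynomial.eval z) (charmatrix M).det
      = ((Polynomial.evalRingHom z).mapMatrix (charmatrix M)).det from
    (RingHom.map_det (Polynomial.evalRingHom z) (charmatrix M) : _)]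
  congr 1
  ext i j
  by_cases h : i = j
  · subst h; simp [charmatrix_apply_eq, Matrix.one_apply]
  · simp [charmatrix_apply_ne _ _ _ h, Matrix.one_apply, h]

lemma foldr_max_le_of_forall {R : ℝ} (hR : 0 ≤ R) (s : Multiset ℝ)
    (h : ∀ a ∈ s, a ≤ R) : s.foldr max 0 ≤ R := by
  induction s using Multiset.induction_on with
  | empty => simpa using hR
  | cons a s ih =>
      rw [Multiset.foldr_cons]
      exact max_le (h a (Multiset.mem_cons_self a s))
        (ih fun b hb => h b (Multiset.mem_cons_of_mem hb))

lemma le_foldr_max (s : Multiset ℝ) (a : ℝ) (ha : a ∈ s) : a ≤ s.foldr max 0 := by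
  induction s using Multiset.induction_on with
  | empty => simp at ha
  | cons b s ih =>
      rw [Multiset.foldr_cons]
      rcases Multiset.mem_cons.mp ha with h | h
      · subst h; exact le_max_left _ _
      · exact le_trans (ih h) (le_max_right _ _)

lemma foldr_max_mem (s : Multiset ℝ) : s.foldr max 0 = 0 ∨ s.foldr max 0 ∈ s := by
  induction s using Multiset.induction_on with
  | empty => simp
  | cons b s ih =>
      rw [Multiset.foldr_cons]
      rcases max_cases b (s.foldr max 0) with ⟨h1, _⟩ | ⟨h1, _⟩
      · right; rw [h1]; exact Multiset.mem_cons_self b s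
      · rcases ih with h | h
        · exact Or.inl (h1.trans h)
        · right; rw [h1]; exact Multiset.mem_cons_of_mem h

lemma exists_subeigen {n : ℕ} (C : Matrix (Fin n) (Fin n) ℝ) (hC : ∀ i j, 0 ≤ C i j)
    (z : ℂ) (hz : ((C.map (fun x => (x : ℂ))).charpoly).IsRoot z) :
    ∃ (p : Fin n) (y : Fin n → ℝ), y p = 1 ∧ (∀ j, 0 ≤ y j) ∧ (∀ j, y j ≤ 1) ∧
      ∀ j, ‖z‖ * y j ≤ ∑ l, C j l * y l := by
  have hdet : (z • (1 : Matrix (Fin n) (Fin n) ℂ) - C.map (fun x => (x : ℂ))).det = 0 := by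
    rw [← my_charpoly_eval]; exact hz
  obtain ⟨x, hx0, hxe⟩ := (Matrix.exists_mulVec_eq_zero_iff).mpr hdet
  have hxe' : ∀ j, ∑ l, (C j l : ℂ) * x l = z * x j := by
    intro j
    have := congrFun hxe j
    rw [Matrix.sub_mulVec, Matrix.smul_mulVec, Matrix.one_mulVec] at this
    have h2 : (C.map (fun x => (x : ℂ))).mulVec x j = ∑ l, (C j l : ℂ) * x l := by
      simp [Matrix.mulVec, dotProduct, Matrix.map_apply]
    simp only [Pi.sub_apply, Pi.zero_apply, Pi.smul_apply, sub_eq_zero, smul_eq_mul] at this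
    rw [h2] at this; exact this.symm
  obtain ⟨j0, hj0⟩ : ∃ j, x j ≠ 0 := Function.ne_iff.mp hx0
  obtain ⟨p, -, hp⟩ := Finset.exists_max_image Finset.univ (fun j => ‖x j‖)
    ⟨j0, Finset.mem_univ j0⟩
  have hc : 0 < ‖x p‖ :=
    lt_of_lt_of_le (by simpa using hj0) (hp j0 (Finset.mem_univ j0))
  refine ⟨p, fun j => ‖x j‖ / ‖x p‖, div_self hc.ne', ?_, ?_, ?_⟩
  · intro j; positivity
  · intro j; exact div_le_one_of_le₀ (hp j (Finset.mem_univ j)) hc.le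
  · intro j
    have key : ‖z‖ * ‖x j‖ ≤ ∑ l, C j l * ‖x l‖ := by
      rw [← norm_mul, ← hxe' j]
      calc ‖∑ l, (C j l : ℂ) * x l‖ ≤ ∑ l, ‖(C j l : ℂ) * x l‖ :=
            norm_sum_le _ _
        _ = ∑ l, C j l * ‖x l‖ := by
            refine Finset.sum_congr rfl fun l _ => ?_
            rw [norm_mul, Complex.norm_real, Real.norm_of_nonneg (hC j l)]
    have h2 : (∑ l, C j l * (‖x l‖ / ‖x p‖))
        = (∑ l, C j l * ‖x l‖) / ‖x p‖ := by
      rw [Finset.sum_div]; exact Finset.sum_congr rfl fun l _ => (mul_div_assoc _ _ _).symm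
    simp only
    rw [h2, mul_div_assoc']
    exact (div_le_div_iff_of_pos_right hc).mpr key



section Chain
variable {n : ℕ} (C : Matrix (Fin n) (Fin n) ℝ) {m d f t : ℝ} {y : Fin n → ℝ}

lemma chain_ineq (hC : ∀ i j, 0 ≤ C i j) (hm : m = ∑ i, ∑ j, C i j)
    (hd0 : 0 ≤ d) (hf0 : 0 ≤ f) (hd : ∀ i, C i i ≤ d) (hf : ∀ i j, i ≠ j → C i j ≤ f)
    (ht : 0 ≤ t) (hy0 : ∀ j, 0 ≤ y j) (hy1 : ∀ j, y j ≤ 1)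
    (hsub : ∀ j, t * y j ≤ ∑ l, C j l * y l) (q : Fin n) (hq : y q = 1) :
    t ≤ (∑ l, C q l * y l) ∧ (∑ l, C q l * y l) * (t + f - d) ≤ f * m := by
  set r : Fin n → ℝ := fun j => ∑ l, C j l * y l with hr
  set R : Fin n → ℝ := fun j => ∑ l, C j l with hR
  have hr0 : ∀ j, 0 ≤ r j := fun j =>
    Finset.sum_nonneg fun l _ => mul_nonneg (hC j l) (hy0 l)
  have hrR : ∀ j, r j ≤ R j := fun j =>
    Finset.sum_le_sum fun l _ => mul_le_of_le_one_right (hC j l) (hy1 l)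
  have hR0 : ∀ j, 0 ≤ R j := fun j => Finset.sum_nonneg fun l _ => hC j l
  have hRm : ∑ j, R j = m := hm.symm
  have htr : t ≤ r q := by have := hsub q; rwa [hq, mul_one] at this
  have step2 : t * r q ≤ ∑ j, C q j * r j := by
    have : t * r q = ∑ j, C q j * (t * y j) := by
      rw [hr, Finset.mul_sum]; exact Finset.sum_congr rfl fun j _ => by ring
    rw [this]
    exact Finset.sum_le_sum fun j _ => mul_le_mul_of_nonneg_left (hsub j) (hC q j)
  have step3 : ∑ j, C q j * r j ≤ C q q * r q + f * (m - R q) := by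
    rw [← Finset.add_sum_erase _ _ (Finset.mem_univ q)]
    have h1 : ∑ j ∈ Finset.univ.erase q, C q j * r j ≤ ∑ j ∈ Finset.univ.erase q, f * R j :=
      Finset.sum_le_sum fun j hj => by
        have hjq : j ≠ q := Finset.ne_of_mem_erase hj
        exact mul_le_mul (hf q j (Ne.symm hjq)) (hrR j) (hr0 j) hf0
    have h2 : ∑ j ∈ Finset.univ.erase q, f * R j = f * (m - R q) := by
      rw [← Finset.mul_sum, Finset.sum_erase_eq_sub (Finset.mem_univ q), hRm]
    linarith
  have hqq : C q q ≤ d := hd q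
  have hcqq0 : 0 ≤ C q q := hC q q
  constructor
  · exact htr
  · nlinarith [hr0 q, hrR q, hR0 q, mul_le_mul_of_nonneg_right hqq (hr0 q),
      mul_le_mul_of_nonneg_left (hrR q) hf0]
end Chain

section Eq
variable {n : ℕ} (C : Matrix (Fin n) (Fin n) ℝ) {m d f t : ℝ} {y : Fin n → ℝ}

lemma chain_eq (hC : ∀ i j, 0 ≤ C i j) (hm : m = ∑ i, ∑ j, C i j)
    (hd0 : 0 ≤ d) (hf0 : 0 ≤ f) (hd : ∀ i, C i i ≤ d) (hf : ∀ i j, i ≠ j → C i j ≤ f)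
    (ht : 0 < t) (hy0 : ∀ j, 0 ≤ y j) (hy1 : ∀ j, y j ≤ 1)
    (hsub : ∀ j, t * y j ≤ ∑ l, C j l * y l)
    (heq : t * (t + f - d) = f * m) (hpos : 0 < t + f - d) (hfpos : 0 < f)
    (q : Fin n) (hq : y q = 1) :
    C q q = d ∧ (∑ l, C q l) = t ∧
      ∀ j, j ≠ q → (C q j = 0 ∧ (∑ l, C j l) = 0) ∨
        (C q j = f ∧ (∑ l, C j l) = t ∧ y j = 1) := by
  obtain ⟨htr, hch⟩ := chain_ineq C hC hm hd0 hf0 hd hf ht.le hy0 hy1 hsub q hq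
  set r : Fin n → ℝ := fun j => ∑ l, C j l * y l with hrdef
  set R : Fin n → ℝ := fun j => ∑ l, C j l with hRdef
  have hr0 : ∀ j, 0 ≤ r j := fun j =>
    Finset.sum_nonneg fun l _ => mul_nonneg (hC j l) (hy0 l)
  have hrR : ∀ j, r j ≤ R j := fun j =>
    Finset.sum_le_sum fun l _ => mul_le_of_le_one_right (hC j l) (hy1 l)
  have hR0 : ∀ j, 0 ≤ R j := fun j => Finset.sum_nonneg fun l _ => hC j l
  have hRm : ∑ j, R j = m := hm.symm
  -- r q = t
  have hrq : r q = t := by nlinarith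
  -- the four slack equalities
  have step2' : ∀ j, C q j * (t * y j) ≤ C q j * r j := fun j =>
    mul_le_mul_of_nonneg_left (hsub j) (hC q j)
  have step2 : t * r q ≤ ∑ j, C q j * r j := by
    have h0 : t * r q = ∑ j, C q j * (t * y j) := by
      rw [hrdef, Finset.mul_sum]; exact Finset.sum_congr rfl fun j _ => by ring
    rw [h0]; exact Finset.sum_le_sum fun j _ => step2' j
  have hsplit : ∑ j, C q j * r j = C q q * r q + ∑ j ∈ Finset.univ.erase q, C q j * r j :=
    (Finset.add_sum_erase _ _ (Finset.mem_univ q)).symm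
  have h1' : ∀ j ∈ Finset.univ.erase q, C q j * r j ≤ f * R j := fun j hj =>
    mul_le_mul (hf q j (Ne.symm (Finset.ne_of_mem_erase hj))) (hrR j) (hr0 j) hf0
  have h1 : ∑ j ∈ Finset.univ.erase q, C q j * r j ≤ ∑ j ∈ Finset.univ.erase q, f * R j :=
    Finset.sum_le_sum h1'
  have h2 : ∑ j ∈ Finset.univ.erase q, f * R j = f * (m - R q) := by
    rw [← Finset.mul_sum, Finset.sum_erase_eq_sub (Finset.mem_univ q), hRm]
  have hqq : C q q ≤ d := hd q
  -- totals
  have hglobal : t * r q + f * r q - d * r q = f * m := by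
    have : r q * (t + f - d) = f * m := by rw [hrq]; exact heq
    linarith [this, (by ring : r q * (t + f - d) = t * r q + f * r q - d * r q)]
  have hCd : C q q * r q ≤ d * r q := mul_le_mul_of_nonneg_right hqq (hr0 q)
  have hfr : f * r q ≤ f * R q := mul_le_mul_of_nonneg_left (hrR q) hf0
  have hsum2 : ∑ j, C q j * r j = t * r q := by linarith
  have hsum1 : ∑ j ∈ Finset.univ.erase q, C q j * r j = ∑ j ∈ Finset.univ.erase q, f * R j := by
    linarith
  have hCqq : C q q = d := by
    have h3 : C q q * r q = d * r q := by linarith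
    have hrq0 : r q ≠ 0 := by rw [hrq]; exact ht.ne'
    exact mul_right_cancel₀ hrq0 h3
  have hRq : R q = t := by
    have h4 : f * R q = f * r q := by linarith
    have := mul_left_cancel₀ hfpos.ne' h4
    rw [this, hrq]
  -- per-term equalities
  have per2 : ∀ j, C q j * (t * y j) = C q j * r j := by
    have h0 : t * r q = ∑ j, C q j * (t * y j) := by
      rw [hrdef, Finset.mul_sum]; exact Finset.sum_congr rfl fun j _ => by ring
    have := (Finset.sum_eq_sum_iff_of_le (fun j _ => step2' j)).mp (by rw [← h0, hsum2])
    exact fun j => (this j (Finset.mem_univ j))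
  have per1 : ∀ j ∈ Finset.univ.erase q, C q j * r j = f * R j := by
    have := (Finset.sum_eq_sum_iff_of_le h1').mp hsum1
    exact fun j hj => (this j hj)
  have perR : ∀ j, C q j * y j = C q j := by
    have hle : ∀ j ∈ Finset.univ, C q j * y j ≤ C q j := fun j _ =>
      mul_le_of_le_one_right (hC q j) (hy1 j)
    have hsumeq : ∑ j, C q j * y j = ∑ j, C q j := by
      show r q = R q; rw [hrq, hRq]
    have := (Finset.sum_eq_sum_iff_of_le hle).mp hsumeq
    exact fun j => (this j (Finset.mem_univ j))
  refine ⟨hCqq, hRq, fun j hjq => ?_⟩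
  rcases eq_or_lt_of_le (hC q j) with hz | hpos'
  · left
    refine ⟨hz.symm, ?_⟩
    have := per1 j (Finset.mem_erase.mpr ⟨hjq, Finset.mem_univ j⟩)
    rw [← hz] at this
    have : f * R j = 0 := by linarith
    have := (mul_eq_zero.mp this).resolve_left hfpos.ne'
    exact this
  · right
    have hyj : y j = 1 := by
      have := perR j
      have h := mul_left_cancel₀ hpos'.ne' (by linarith [this] : C q j * y j = C q j * 1)
      exact h
    have hrj : r j = t := by
      have := per2 j
      rw [hyj, mul_one] at this
      exact (mul_left_cancel₀ hpos'.ne' this).symm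
    have hkey : C q j * t = f * R j := by
      have := per1 j (Finset.mem_erase.mpr ⟨hjq, Finset.mem_univ j⟩)
      rw [hrj] at this; exact this
    have htR : t ≤ R j := hrj ▸ hrR j
    have hCf : C q j ≤ f := hf q j (Ne.symm hjq)
    have hRt : R j = t := by nlinarith
    have : C q j = f := by
      rw [hRt] at hkey
      exact mul_right_cancel₀ ht.ne' hkey
    exact ⟨this, hRt, hyj⟩
end Eq

section part1
variable {n : ℕ} {C : Matrix (Fin n) (Fin n) ℝ} {m d f : ℝ}

lemma m_nonneg (hC : ∀ i j, 0 ≤ C i j) (hm : m = ∑ i, ∑ j, C i j) : 0 ≤ m :=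
  hm ▸ Finset.sum_nonneg fun i _ => Finset.sum_nonneg fun j _ => hC i j

lemma sqrt_facts (hfm : 0 ≤ f * m) :
    (Real.sqrt ((d - f) ^ 2 + 4 * m * f)) ^ 2 = (d - f) ^ 2 + 4 * m * f ∧
    |d - f| ≤ Real.sqrt ((d - f) ^ 2 + 4 * m * f) := by
  have h0 : (0:ℝ) ≤ (d - f) ^ 2 + 4 * m * f := by nlinarith [sq_nonneg (d-f)]
  constructor
  · exact Real.sq_sqrt h0
  · rw [← Real.sqrt_sq_eq_abs]
    exact Real.sqrt_le_sqrt (by nlinarith)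

lemma part1 (hC : ∀ i j, 0 ≤ C i j) (hm : m = ∑ i, ∑ j, C i j)
    (hd0 : 0 ≤ d) (hf0 : 0 ≤ f) (hd : ∀ i, C i i ≤ d) (hf : ∀ i j, i ≠ j → C i j ≤ f) :
    specRad C ≤ (d - f + Real.sqrt ((d - f) ^ 2 + 4 * m * f)) / 2 := by
  have hfm : 0 ≤ f * m := mul_nonneg hf0 (m_nonneg hC hm)
  obtain ⟨hs2, hsabs⟩ := sqrt_facts (d := d) (f := f) (m := m) hfm
  set s := Real.sqrt ((d - f) ^ 2 + 4 * m * f) with hs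
  set R := (d - f + s) / 2 with hR
  have hR0 : 0 ≤ R := by
    have h2 : -(d-f) ≤ s := le_trans (neg_le_abs (d-f)) hsabs
    rw [hR]; linarith
  have hRq : R * (R + f - d) = f * m := by
    have : s ^ 2 = (d-f)^2 + 4*m*f := hs2
    rw [hR]; nlinarith
  have hRfd : 0 ≤ R + f - d := by
    have h2 : (d-f) ≤ s := le_trans (le_abs_self (d-f)) hsabs
    rw [hR]; linarith
  apply foldr_max_le_of_forall hR0
  intro a ha
  obtain ⟨z, hz, rfl⟩ := Multiset.mem_map.mp ha
  have hroot := Polynomial.isRoot_of_mem_roots hz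
  obtain ⟨p, y, hyp, hy0, hy1, hsub⟩ := exists_subeigen C hC z hroot
  set t := ‖z‖ with htd
  have ht0 : (0:ℝ) ≤ t := norm_nonneg z
  obtain ⟨h1, h2⟩ := chain_ineq C hC hm hd0 hf0 hd hf ht0 hy0 hy1 hsub p hyp
  have key : t * (t + f - d) ≤ f * m := by
    rcases le_or_gt 0 (t + f - d) with hsgn | hsgn
    · calc t * (t + f - d) ≤ (∑ l, C p l * y l) * (t + f - d) :=
            mul_le_mul_of_nonneg_right h1 hsgn
        _ ≤ f * m := h2
    · nlinarith
  -- quadratic: t ≤ R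
  by_contra hcon
  push_neg at hcon
  have : R < t := hcon
  nlinarith
end part1

lemma card_filter_lt_fin {n k : ℕ} (hk : k ≤ n) :
    (Finset.univ.filter (fun b : Fin n => (b : ℕ) < k)).card = k := by
  have : (Finset.univ.filter (fun b : Fin n => (b : ℕ) < k))
      = (Finset.range k).attachFin (fun m hm => lt_of_lt_of_le (Finset.mem_range.mp hm) hk) := by
    ext b
    simp [Finset.mem_attachFin]
  rw [this, Finset.card_attachFin, Finset.card_range]

lemma root_of_eigen {n : ℕ} (C : Matrix (Fin n) (Fin n) ℝ) (z : ℂ) (x : Fin n → ℂ)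
    (hx : x ≠ 0) (he : ∀ j, ∑ l, (C j l : ℂ) * x l = z * x j) :
    z ∈ ((C.map (fun x => (x : ℂ))).charpoly).roots := by
  rw [Polynomial.mem_roots ((C.map (fun x => (x : ℂ))).charpoly_monic.ne_zero)]
  rw [Polynomial.IsRoot, my_charpoly_eval]
  rw [← Matrix.exists_mulVec_eq_zero_iff]
  refine ⟨x, hx, ?_⟩
  funext j
  rw [Matrix.sub_mulVec, Matrix.smul_mulVec, Matrix.one_mulVec]
  have h2 : (C.map (fun x => (x : ℂ))).mulVec x j = ∑ l, (C j l : ℂ) * x l := by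
    simp [Matrix.mulVec, dotProduct, Matrix.map_apply]
  simp only [Pi.sub_apply, Pi.smul_apply, smul_eq_mul, Pi.zero_apply]
  rw [h2, he j, sub_self]


section bwd
variable {n : ℕ} {C : Matrix (Fin n) (Fin n) ℝ} {m d f : ℝ}

lemma backward (hC : ∀ i j, 0 ≤ C i j) (hm : m = ∑ i, ∑ j, C i j)
    (hd0 : 0 ≤ d) (hf0 : 0 ≤ f) (hd : ∀ i, C i i ≤ d) (hf : ∀ i j, i ≠ j → C i j ≤ f)
    (hmf : 0 < m * f) (k : ℕ) (hkn : k ≤ n)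
    (hmk : m = (k : ℝ) * ((k : ℝ) - 1) * f + (k : ℝ) * d)
    (σ : Equiv.Perm (Fin n))
    (hCσ : ∀ i j : Fin n, C (σ i) (σ j) =
      if (i : ℕ) < k ∧ (j : ℕ) < k then (if i = j then d else f) else 0) :
    specRad C = (d - f + Real.sqrt ((d - f) ^ 2 + 4 * m * f)) / 2 := by
  have hfpos : 0 < f := by
    rcases lt_or_eq_of_le hf0 with h | h; · exact h
    · exfalso; rw [← h, mul_zero] at hmf; exact lt_irrefl 0 hmf
  have hmpos : 0 < m := by
    by_contra h; push_neg at h; nlinarith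
  have hk1 : 1 ≤ k := by
    by_contra h; push_neg at h
    interval_cases k
    simp at hmk; nlinarith
  have hk1' : (1:ℝ) ≤ (k:ℝ) := by exact_mod_cast hk1
  set t₀ : ℝ := d + ((k:ℝ) - 1) * f with ht₀
  have ht₀0 : 0 ≤ t₀ := by nlinarith
  -- sqrt computation
  have hsqrt : Real.sqrt ((d - f) ^ 2 + 4 * m * f) = d + (2*(k:ℝ) - 1) * f := by
    have h1 : (d - f) ^ 2 + 4 * m * f = (d + (2*(k:ℝ) - 1) * f)^2 := by
      rw [hmk]; ring
    rw [h1, Real.sqrt_sq (by nlinarith)]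
  have hRt : (d - f + Real.sqrt ((d - f) ^ 2 + 4 * m * f)) / 2 = t₀ := by
    rw [hsqrt, ht₀]; ring
  rw [hRt]
  -- upper bound: from part1 (axiomatize here)
  have hub : specRad C ≤ t₀ := by rw [← hRt]; exact part1 hC hm hd0 hf0 hd hf
  -- lower bound: t₀ is an eigenvalue
  have hlb : t₀ ≤ specRad C := by
    set x : Fin n → ℂ := fun j => if ((σ.symm j : Fin n) : ℕ) < k then 1 else 0 with hx
    have hn0 : 0 < n := lt_of_lt_of_le hk1 hkn
    have hx0 : x ≠ 0 := by
      intro h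
      have h0k : (0:ℕ) < k := hk1
      have := congrFun h (σ ⟨0, hn0⟩)
      simp only [hx, Equiv.symm_apply_apply, Pi.zero_apply] at this
      rw [if_pos h0k] at this
      exact one_ne_zero this
    have heig : ∀ j, ∑ l, (C j l : ℂ) * x l = (t₀:ℂ) * x j := by
      intro j
      have hresum : ∑ l, (C j l : ℂ) * x l = ∑ b, (C (σ (σ.symm j)) (σ b) : ℂ) * x (σ b) := by
        rw [Equiv.apply_symm_apply]
        exact (Equiv.sum_comp σ (fun l => (C j l : ℂ) * x l)).symm
      rw [hresum]
      set a := σ.symm j with ha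
      have hxσ : ∀ b : Fin n, x (σ b) = if (b:ℕ) < k then 1 else 0 := by
        intro b; simp [hx]
      have hxj : x j = if (a:ℕ) < k then 1 else 0 := rfl
      by_cases hak : (a:ℕ) < k
      · have hterm : ∀ b : Fin n, (C (σ a) (σ b) : ℂ) * x (σ b)
            = (if (b:ℕ) < k then (f:ℂ) else 0) + (if b = a then (((d:ℝ) - f : ℝ):ℂ) else 0) := by
          intro b
          rw [hxσ b, hCσ a b]
          by_cases hbk : (b:ℕ) < k
          · by_cases hab : a = b
            · subst hab
              rw [if_pos ⟨hak, hbk⟩, if_pos rfl, if_pos hbk, if_pos hbk, if_pos rfl]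
              push_cast; ring
            · rw [if_pos ⟨hak, hbk⟩, if_neg hab, if_pos hbk, if_pos hbk,
                if_neg (Ne.symm hab)]
              push_cast; ring
          · have hba : b ≠ a := fun h => hbk (h ▸ hak)
            rw [if_neg (fun hc => hbk hc.2), if_neg hbk, if_neg hbk, if_neg hba]
            push_cast; ring
        rw [Finset.sum_congr rfl (fun b _ => hterm b), Finset.sum_add_distrib,
          ← Finset.sum_filter, Finset.sum_const, card_filter_lt_fin hkn,
          Finset.sum_ite_eq' Finset.univ a (fun _ => (((d:ℝ) - f : ℝ):ℂ)),
          if_pos (Finset.mem_univ a), hxj, if_pos hak, nsmul_eq_mul]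
        rw [ht₀]; push_cast; ring
      · have hterm : ∀ b : Fin n, (C (σ a) (σ b) : ℂ) * x (σ b) = 0 := by
          intro b
          rw [hCσ a b, hxσ b]
          rw [if_neg (by tauto)]
          simp
        rw [Finset.sum_congr rfl (fun b _ => hterm b), Finset.sum_const_zero, hxj,
          if_neg hak, mul_zero]
    have hroot := root_of_eigen C (t₀:ℂ) x hx0 heig
    have habs : ‖(t₀:ℂ)‖ = t₀ := by
      rw [Complex.norm_real, Real.norm_of_nonneg ht₀0]
    have : ‖(t₀:ℂ)‖ ∈ ((C.map (fun r => (r : ℂ))).charpoly.roots.map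
        (fun z => ‖z‖)) := Multiset.mem_map_of_mem _ hroot
    rw [habs] at this
    exact le_foldr_max _ _ this
  linarith
end bwd

lemma exists_perm_finset {n : ℕ} (K : Finset (Fin n)) :
    ∃ σ : Equiv.Perm (Fin n), ∀ i : Fin n, σ i ∈ K ↔ (i : ℕ) < K.card := by
  classical
  set L : List (Fin n) := K.sort (· ≤ ·) ++ Kᶜ.sort (· ≤ ·) with hL
  have hlen : L.length = n := by
    rw [hL, List.length_append, Finset.length_sort, Finset.length_sort,
      Finset.card_add_card_compl, Fintype.card_fin]
  have hnodup : L.Nodup := by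
    refine List.Nodup.append (Finset.sort_nodup _ _) (Finset.sort_nodup _ _) ?_
    intro a haK haKc
    rw [Finset.mem_sort] at haK haKc
    exact (Finset.mem_compl.mp haKc) haK
  have hinj : Function.Injective (fun i : Fin n => L.get (Fin.cast hlen.symm i)) := by
    intro a b hab
    have := List.nodup_iff_injective_get.mp hnodup hab
    exact Fin.ext (by simpa using congrArg Fin.val this)
  refine ⟨Equiv.ofBijective _ ((Fintype.bijective_iff_injective_and_card _).mpr
    ⟨hinj, rfl⟩), ?_⟩
  intro i
  simp only [Equiv.ofBijective_apply]
  by_cases hik : (i : ℕ) < K.card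
  · have hik' : (i : ℕ) < (K.sort (· ≤ ·)).length := by
      rwa [Finset.length_sort]
    have : L.get (Fin.cast hlen.symm i) = (K.sort (· ≤ ·)).get ⟨i, hik'⟩ := by
      simp only [hL, List.get_eq_getElem]
      exact List.getElem_append_left hik'
    rw [this]
    simp only [hik, iff_true]
    exact (Finset.mem_sort _).mp (List.get_mem _ _)
  · have hik'' : (K.sort (· ≤ ·)).length ≤ (i : ℕ) := by
      rw [Finset.length_sort]; omega
    have hlt : (i : ℕ) - (K.sort (· ≤ ·)).length < (Kᶜ.sort (· ≤ ·)).length := by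
      rw [Finset.length_sort, Finset.length_sort]
      have := i.isLt
      have hcc : K.card + Kᶜ.card = n := by
        rw [Finset.card_add_card_compl, Fintype.card_fin]
      omega
    have : L.get (Fin.cast hlen.symm i)
        = (Kᶜ.sort (· ≤ ·)).get ⟨(i : ℕ) - (K.sort (· ≤ ·)).length, hlt⟩ := by
      simp only [hL, List.get_eq_getElem]
      exact List.getElem_append_right hik''
    rw [this]
    simp only [hik, iff_false]
    have hmem : (Kᶜ.sort (· ≤ ·)).get ⟨(i : ℕ) - (K.sort (· ≤ ·)).length, hlt⟩ ∈ Kᶜ :=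
      (Finset.mem_sort _).mp (List.get_mem _ _)
    exact Finset.mem_compl.mp hmem

section fwd
variable {n : ℕ} {C : Matrix (Fin n) (Fin n) ℝ} {m d f : ℝ}

lemma forward (hC : ∀ i j, 0 ≤ C i j) (hm : m = ∑ i, ∑ j, C i j)
    (hd0 : 0 ≤ d) (hf0 : 0 ≤ f) (hd : ∀ i, C i i ≤ d) (hf : ∀ i j, i ≠ j → C i j ≤ f)
    (hmf : 0 < m * f)
    (heq : specRad C = (d - f + Real.sqrt ((d - f) ^ 2 + 4 * m * f)) / 2) :
    ∃ k : ℕ, k ≤ n ∧ m = (k : ℝ) * ((k : ℝ) - 1) * f + (k : ℝ) * d ∧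
      ∃ σ : Equiv.Perm (Fin n), ∀ i j : Fin n,
        C (σ i) (σ j) =
          if (i : ℕ) < k ∧ (j : ℕ) < k then (if i = j then d else f) else 0 := by
  classical
  have hfpos : 0 < f := by
    rcases lt_or_eq_of_le hf0 with h | h; · exact h
    · exfalso; rw [← h, mul_zero] at hmf; exact lt_irrefl 0 hmf
  have hmpos : 0 < m := by by_contra h; push_neg at h; nlinarith
  have hfm : 0 ≤ f * m := by positivity
  obtain ⟨hs2, hsabs⟩ := sqrt_facts (m := m) (d := d) (f := f) hfm
  set s := Real.sqrt ((d - f) ^ 2 + 4 * m * f) with hsdef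
  set R := (d - f + s) / 2 with hRdef
  have hslt : |d - f| < s := by
    rcases lt_or_eq_of_le hsabs with h | h; · exact h
    · exfalso
      have : s ^ 2 = (d - f) ^ 2 := by rw [← h, sq_abs]
      nlinarith
  have hRpos : 0 < R := by
    have h2 : -(d - f) ≤ |d - f| := neg_le_abs (d - f)
    rw [hRdef]; linarith
  have hpos : 0 < R + f - d := by
    have h2 : (d - f) ≤ |d - f| := le_abs_self (d - f)
    rw [hRdef]; linarith
  have hReq : R * (R + f - d) = f * m := by rw [hRdef]; nlinarith
  -- find root achieving specRad
  have hspec : specRad C = R := heq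
  rcases foldr_max_mem (((C.map (fun x => (x : ℂ))).charpoly.roots.map
      (fun z => ‖z‖))) with h0 | hmem
  · exfalso
    rw [specRad] at hspec
    rw [h0] at hspec
    exact hRpos.ne hspec
  · obtain ⟨z, hzroots, hzabs⟩ := Multiset.mem_map.mp hmem
    have hzR : ‖z‖ = R := by
      rw [hzabs]; exact hspec
    obtain ⟨p, y, hyp, hy0, hy1, hsub⟩ :=
      exists_subeigen C hC z (Polynomial.isRoot_of_mem_roots hzroots)
    rw [hzR] at hsub
    have goodp := chain_eq C hC hm hd0 hf0 hd hf hRpos hy0 hy1 hsub hReq hpos hfpos p hyp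
    set K := Finset.univ.filter (fun j : Fin n => (∑ l, C j l) = R) with hKdef
    have hmemK : ∀ j, j ∈ K ↔ (∑ l, C j l) = R := by
      intro j; rw [hKdef, Finset.mem_filter]; simp
    have hpK : p ∈ K := (hmemK p).mpr goodp.2.1
    have hyK : ∀ j, j ∈ K → y j = 1 := by
      intro j hj
      by_cases hjp : j = p
      · rw [hjp]; exact hyp
      · rcases goodp.2.2 j hjp with ⟨-, hR0⟩ | ⟨-, -, hy⟩
        · exfalso; rw [(hmemK j).mp hj] at hR0; exact hRpos.ne' hR0
        · exact hy
    have hgood : ∀ q, q ∈ K → C q q = d ∧ (∑ l, C q l) = R ∧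
        ∀ j, j ≠ q → (C q j = 0 ∧ (∑ l, C j l) = 0) ∨
          (C q j = f ∧ (∑ l, C j l) = R ∧ y j = 1) :=
      fun q hq => chain_eq C hC hm hd0 hf0 hd hf hRpos hy0 hy1 hsub hReq hpos hfpos q (hyK q hq)
    have hrowzero : ∀ j, j ∉ K → ∀ l, C j l = 0 := by
      intro j hjK l
      have hjp : j ≠ p := fun h => hjK (h ▸ hpK)
      rcases goodp.2.2 j hjp with ⟨-, hR0⟩ | ⟨-, hRj, -⟩
      · exact (Finset.sum_eq_zero_iff_of_nonneg (fun l _ => hC j l)).mp hR0 l (Finset.mem_univ l)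
      · exact absurd ((hmemK j).mpr hRj) hjK
    set k := K.card with hkdef
    have hkn : k ≤ n := by
      rw [hkdef]; calc K.card ≤ Fintype.card (Fin n) := Finset.card_le_univ K
        _ = n := Fintype.card_fin n
    have hmkR : m = (k : ℝ) * R := by
      have hsplit : m = ∑ j, (∑ l, C j l) := by
        rw [hm]
      rw [hsplit, ← Finset.sum_filter_add_sum_filter_not Finset.univ
        (fun j : Fin n => (∑ l, C j l) = R)]
      have hA : ∑ j ∈ Finset.univ.filter (fun j : Fin n => (∑ l, C j l) = R), (∑ l, C j l)
          = (k:ℝ) * R := by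
        rw [Finset.sum_congr rfl (fun j hj => (hmemK j).mp (by rwa [hKdef]))]
        rw [Finset.sum_const, nsmul_eq_mul, hkdef, hKdef]
      have hB : ∑ j ∈ Finset.univ.filter (fun j : Fin n => ¬(∑ l, C j l) = R), (∑ l, C j l)
          = 0 := by
        refine Finset.sum_eq_zero fun j hj => ?_
        have hjK : j ∉ K := by
          rw [hKdef]
          simp only [Finset.mem_filter] at hj ⊢
          tauto
        exact Finset.sum_eq_zero fun l _ => hrowzero j hjK l
      rw [hA, hB, add_zero]
    have hkpos : 0 < k := by
      by_contra h
      push_neg at h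
      interval_cases k
      rw [Nat.cast_zero, zero_mul] at hmkR
      exact hmpos.ne' hmkR
    have hk1' : (1:ℝ) ≤ (k:ℝ) := by exact_mod_cast hkpos
    have hRk : R = d + ((k:ℝ) - 1) * f := by
      have h1 : R * (R + f - d) = R * ((k:ℝ) * f) := by
        rw [hReq, hmkR]; ring
      have h2 : R + f - d = (k:ℝ) * f := mul_left_cancel₀ hRpos.ne' h1
      linarith
    refine ⟨k, hkn, by rw [hmkR, hRk]; ring, ?_⟩
    obtain ⟨σ, hσ⟩ := exists_perm_finset K
    refine ⟨σ, fun i j => ?_⟩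
    by_cases hik : (i : ℕ) < k
    · have hiK : σ i ∈ K := (hσ i).mpr hik
      by_cases hjk : (j : ℕ) < k
      · have hjK : σ j ∈ K := (hσ j).mpr hjk
        by_cases hij : i = j
        · subst hij
          rw [if_pos ⟨hik, hjk⟩, if_pos rfl]
          exact (hgood (σ i) hiK).1
        · have hσij : σ j ≠ σ i := fun h => hij (σ.injective h.symm)
          rcases (hgood (σ i) hiK).2.2 (σ j) hσij with ⟨-, hRj0⟩ | ⟨hCf, -, -⟩
          · exfalso
            rw [(hmemK (σ j)).mp hjK] at hRj0
            exact hRpos.ne' hRj0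
          · rw [if_pos ⟨hik, hjk⟩, if_neg hij]; exact hCf
      · have hjK : σ j ∉ K := fun h => hjk ((hσ j).mp h)
        have hσij : σ j ≠ σ i := fun h => hjK (h ▸ hiK)
        rcases (hgood (σ i) hiK).2.2 (σ j) hσij with ⟨hC0, -⟩ | ⟨-, hRj, -⟩
        · rw [if_neg (fun hc => hjk hc.2)]; exact hC0
        · exact absurd ((hmemK (σ j)).mpr hRj) hjK
    · have hiK : σ i ∉ K := fun h => hik ((hσ i).mp h)
      rw [if_neg (fun hc => hik hc.1)]
      exact hrowzero (σ i) hiK (σ j)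
end fwd


theorem stmt_14 {n : ℕ} (C : Matrix (Fin n) (Fin n) ℝ)
    (hC : ∀ i j, 0 ≤ C i j)
    (m d f : ℝ) (hm : m = ∑ i, ∑ j, C i j)
    (hd0 : 0 ≤ d) (hf0 : 0 ≤ f)
    (hd : ∀ i, C i i ≤ d) (hf : ∀ i j, i ≠ j → C i j ≤ f) :
    specRad C ≤ (d - f + Real.sqrt ((d - f) ^ 2 + 4 * m * f)) / 2 ∧
      (0 < m * f →
        (specRad C = (d - f + Real.sqrt ((d - f) ^ 2 + 4 * m * f)) / 2 ↔
          ∃ k : ℕ, k ≤ n ∧ m = (k : ℝ) * ((k : ℝ) - 1) * f + (k : ℝ) * d ∧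
            ∃ σ : Equiv.Perm (Fin n), ∀ i j : Fin n,
              C (σ i) (σ j) =
                if (i : ℕ) < k ∧ (j : ℕ) < k then (if i = j then d else f) else 0)) := by
  refine ⟨part1 hC hm hd0 hf0 hd hf, fun hmf => ⟨fun heq => forward hC hm hd0 hf0 hd hf hmf heq, ?_⟩⟩
  rintro ⟨k, hkn, hmk, σ, hCσ⟩
  exact backward hC hm hd0 hf0 hd hf hmf k hkn hmk σ hCσ
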